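/- For 0 ≤ r ≤ 1, the Wendland function satisfies φ_{ℓ,k}(r) = (Γ(ℓ+1)/(2^{ℓ+k} Γ(ℓ+k+1))) (1-r²)^{ℓ+k} · ₂F₁(ℓ/2, (ℓ+1)/2; ℓ+k+1; 1-r²). -/

import Mathlib

open Real MeasureTheory

/-- The Wendland function φ_{ℓ,k}. -/
noncomputable def wendland (l : ℕ) (k : ℝ) (r : ℝ) : ℝ :=
  if r ≤ 1 then
    (1 / (Real.Gamma k * (2:ℝ) ^ (k - 1))) *
      ∫ s in r..1, s * (1 - s) ^ l * (s ^ 2 - r ^ 2) ^ (k - 1)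
  else 0

/-- Pochhammer symbol (rising factorial) for real argument. -/
noncomputable def poch (a : ℝ) (n : ℕ) : ℝ := ∏ i ∈ Finset.range n, (a + i)

/-- The Gauss hypergeometric function ₂F₁ as a series. -/
noncomputable def twoF1 (a b c z : ℝ) : ℝ :=
  ∑' n : ℕ, poch a n * poch b n / poch c n * z ^ n / n.factorial

section Aux
open intervalIntegral Set


/-- coefficients of (1-√(1-x))^l -/
noncomputable def wcoef (l m : ℕ) : ℝ :=
  if l = 0 then (if m = 0 then 1 else 0)
  else if l ≤ m then
    (l : ℝ) * (2*m - l - 1).factorial /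
      ((m.factorial : ℝ) * (m - l).factorial * 2^(2*m - l))
  else 0

lemma wcoef_nonneg (l m : ℕ) : 0 ≤ wcoef l m := by
  unfold wcoef
  split_ifs <;> positivity

lemma wcoef_eq_zero {l m : ℕ} (hl : 1 ≤ l) (h : m < l) : wcoef l m = 0 := by
  unfold wcoef
  rw [if_neg (by omega), if_neg (by omega)]

lemma fact_catalan_eq (p : ℕ) :
    (p+1).factorial * p.factorial * catalan p = (2*p).factorial := by
  have h3 := succ_mul_catalan_eq_centralBinom p
  have h4 := Nat.choose_mul_factorial_mul_factorial (show p ≤ 2*p by omega)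
  have h5 : 2*p - p = p := by omega
  rw [h5] at h4
  calc (p+1).factorial * p.factorial * catalan p
      = p.factorial * p.factorial * ((p+1) * catalan p) := by
        rw [Nat.factorial_succ]; ring
    _ = p.factorial * p.factorial * p.centralBinom := by rw [h3]
    _ = (2*p).choose p * p.factorial * p.factorial := by rw [Nat.centralBinom]; ring
    _ = (2*p).factorial := h4

lemma wcoef_one_eq (m : ℕ) (hm : 1 ≤ m) :
    wcoef 1 m = (catalan (m-1) : ℝ) / 2^(2*m-1) := by
  obtain ⟨p, rfl⟩ : ∃ p, m = p + 1 := ⟨m - 1, by omega⟩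
  unfold wcoef
  rw [if_neg one_ne_zero, if_pos hm]
  have e1 : 2*(p+1) - 1 - 1 = 2*p := by omega
  have e2 : p + 1 - 1 = p := by omega
  have e3 : 2*(p+1) - 1 = 2*p + 1 := by omega
  rw [e1, e2, e3]
  have h1 := fact_catalan_eq p
  have : ((2*p).factorial : ℝ) = ((p+1).factorial : ℝ) * p.factorial * catalan p := by
    exact_mod_cast congrArg (Nat.cast (R := ℝ)) h1.symm
  rw [this]
  have hmf : ((p+1).factorial : ℝ) ≠ 0 := by positivity
  have hmf1 : (p.factorial : ℝ) ≠ 0 := by positivity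
  field_simp
  ring

/-- the telescoping sequence -/
noncomputable def dseq (m : ℕ) : ℝ := (Nat.centralBinom m : ℝ) / 4^m

lemma dseq_nonneg (m : ℕ) : 0 ≤ dseq m := by unfold dseq; positivity

lemma wcoef_one_telescope (m : ℕ) (hm : 1 ≤ m) :
    wcoef 1 m = dseq (m-1) - dseq m := by
  obtain ⟨p, rfl⟩ : ∃ p, m = p + 1 := ⟨m - 1, by omega⟩
  rw [wcoef_one_eq _ hm]
  unfold dseq
  have e2 : p + 1 - 1 = p := by omega
  have e3 : 2*(p+1) - 1 = 2*p + 1 := by omega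
  rw [e2, e3]
  have h1 := Nat.succ_mul_centralBinom_succ p
  -- (p+1) * CB (p+1) = 2(2p+1) CB p
  have h2 : ((p+1) : ℝ) * (Nat.centralBinom (p+1) : ℝ) = 2 * (2*p+1) * Nat.centralBinom p := by
    exact_mod_cast congrArg (Nat.cast (R := ℝ)) h1
  have h3 := succ_mul_catalan_eq_centralBinom p
  have h4 : ((p+1) : ℝ) * (catalan p : ℝ) = (Nat.centralBinom p : ℝ) := by
    exact_mod_cast congrArg (Nat.cast (R := ℝ)) h3
  have hp1 : ((p:ℝ)+1) ≠ 0 := by positivity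
  have h4' : (4:ℝ) ≠ 0 := by norm_num
  have h2' : (Nat.centralBinom (p+1) : ℝ) = 2 * (2*p+1) * Nat.centralBinom p / (p+1) := by
    field_simp at h2 ⊢; push_cast at h2 ⊢; linarith
  rw [h2', ← h4]
  have : (2:ℝ)^(2*p+1) = 2 * 4^p := by
    rw [pow_succ, pow_mul]; norm_num; ring
  rw [this]
  field_simp
  ring

lemma wcoef_one_sum_range (N : ℕ) :
    ∑ m ∈ Finset.range (N+1), wcoef 1 m = 1 - dseq N := by
  induction N with
  | zero =>
      simp [wcoef, dseq, Nat.centralBinom]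
  | succ n ih =>
      rw [Finset.sum_range_succ, ih, wcoef_one_telescope (n+1) (by omega)]
      simp only [Nat.add_sub_cancel]
      ring

lemma wcoef_one_sum_le (N : ℕ) : ∑ m ∈ Finset.range N, wcoef 1 m ≤ 1 := by
  cases N with
  | zero => simp
  | succ n => rw [wcoef_one_sum_range n]; have := dseq_nonneg n; linarith

lemma summable_wcoef_one : Summable (wcoef 1) :=
  summable_of_sum_range_le (fun m => wcoef_nonneg 1 m) wcoef_one_sum_le

lemma tsum_wcoef_one_le : ∑' m, wcoef 1 m ≤ 1 :=
  tsum_le_of_sum_range_le (fun m => wcoef_nonneg 1 m) wcoef_one_sum_le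

lemma wcoef_formula {l m : ℕ} (hl : 1 ≤ l) (h : l ≤ m) :
    wcoef l m = (l : ℝ) * (2*m - l - 1).factorial /
      ((m.factorial : ℝ) * (m - l).factorial * 2^(2*m - l)) := by
  unfold wcoef; rw [if_neg (by omega), if_pos h]

lemma wcoef_diag (l : ℕ) : wcoef l l = 1 / 2^l := by
  cases l with
  | zero => simp [wcoef]
  | succ n =>
      rw [wcoef_formula (by omega) le_rfl]
      have e1 : 2*(n+1) - (n+1) - 1 = n := by omega
      have e2 : (n+1) - (n+1) = 0 := by omega
      have e3 : 2*(n+1) - (n+1) = n+1 := by omega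
      rw [e1, e2, e3]
      have : ((n+1).factorial : ℝ) = (n+1) * n.factorial := by
        rw [Nat.factorial_succ]; push_cast; ring
      rw [this]
      have h1 : (n.factorial : ℝ) ≠ 0 := by positivity
      field_simp
      simp

lemma wcoef_rec (l m : ℕ) :
    wcoef (l+2) (m+1) = 2 * wcoef (l+1) (m+1) - wcoef l m := by
  rcases lt_trichotomy m l with h | rfl | h
  · rw [wcoef_eq_zero (by omega) (by omega), wcoef_eq_zero (by omega) (by omega)]
    rcases Nat.eq_zero_or_pos l with rfl | hl
    · omega
    · rw [wcoef_eq_zero hl h]; ring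
  · rw [wcoef_eq_zero (by omega) (by omega), wcoef_diag, wcoef_diag]
    rw [pow_succ]
    have h2m : (2:ℝ)^m ≠ 0 := by positivity
    field_simp
    ring
  · -- m ≥ l + 1, write m = l + 1 + j
    obtain ⟨j, rfl⟩ : ∃ j, m = l + 1 + j := ⟨m - l - 1, by omega⟩
    have hf2 : wcoef (l+2) (l+1+j+1) =
        ((l:ℝ)+2) * (l+2*j+1).factorial /
          (((l+1+j+1).factorial : ℝ) * j.factorial * 2^(l+2*j+2)) := by
      rw [wcoef_formula (by omega) (by omega)]
      have e1 : 2*(l+1+j+1) - (l+2) - 1 = l+2*j+1 := by omega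
      have e2 : (l+1+j+1) - (l+2) = j := by omega
      have e3 : 2*(l+1+j+1) - (l+2) = l+2*j+2 := by omega
      rw [e1, e2, e3]; push_cast; ring_nf
    have hf1 : wcoef (l+1) (l+1+j+1) =
        ((l:ℝ)+1) * (l+2*j+2).factorial /
          (((l+1+j+1).factorial : ℝ) * (j+1).factorial * 2^(l+2*j+3)) := by
      rw [wcoef_formula (by omega) (by omega)]
      have e1 : 2*(l+1+j+1) - (l+1) - 1 = l+2*j+2 := by omega
      have e2 : (l+1+j+1) - (l+1) = j+1 := by omega
      have e3 : 2*(l+1+j+1) - (l+1) = l+2*j+3 := by omega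
      rw [e1, e2, e3]; push_cast; ring_nf
    have hf0 : wcoef l (l+1+j) =
        (l:ℝ) * (l+2*j+1).factorial /
          (((l+1+j).factorial : ℝ) * (j+1).factorial * 2^(l+2*j+2)) := by
      rcases Nat.eq_zero_or_pos l with rfl | hl
      · simp [wcoef]
      · rw [wcoef_formula hl (by omega)]
        have e1 : 2*(l+1+j) - l - 1 = l+2*j+1 := by omega
        have e2 : (l+1+j) - l = j+1 := by omega
        have e3 : 2*(l+1+j) - l = l+2*j+2 := by omega
        rw [e1, e2, e3]
    rw [hf2, hf1, hf0]
    have r1 : ((l+2*j+2).factorial : ℝ) = (l+2*j+2) * (l+2*j+1).factorial := by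
      have : l+2*j+2 = (l+2*j+1) + 1 := by omega
      rw [this, Nat.factorial_succ]; push_cast; ring
    have r2 : ((j+1).factorial : ℝ) = (j+1) * j.factorial := by
      rw [Nat.factorial_succ]; push_cast; ring
    have r3 : ((l+1+j+1).factorial : ℝ) = (l+j+2) * (l+1+j).factorial := by
      rw [Nat.factorial_succ]; push_cast; ring
    rw [r1, r2, r3]
    have p1 : ((l+2*j+1).factorial : ℝ) ≠ 0 := by positivity
    have p2 : (j.factorial : ℝ) ≠ 0 := by positivity
    have p3 : ((l+1+j).factorial : ℝ) ≠ 0 := by positivity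
    have p4 : ((l:ℝ)+j+2) ≠ 0 := by positivity
    have p5 : ((j:ℝ)+1) ≠ 0 := by positivity
    have p6 : (2:ℝ)^(l+2*j+2) ≠ 0 := by positivity
    have p7 : (2:ℝ)^(l+2*j+3) = 2 * 2^(l+2*j+2) := by rw [pow_succ]; ring
    rw [p7]
    field_simp
    ring

lemma wcoef_le_mul (l m : ℕ) (hl : 1 ≤ l) : wcoef l m ≤ (l:ℝ) * wcoef 1 m := by
  induction l with
  | zero => omega
  | succ n ih =>
      rcases Nat.eq_zero_or_pos n with rfl | hn
      · simp
      · -- step: wcoef (n+1) m ≤ (n+1)/n * wcoef n m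
        have key : (n:ℝ) * wcoef (n+1) m ≤ ((n:ℝ)+1) * wcoef n m := by
          rcases lt_or_ge m (n+1) with h | h
          · rw [wcoef_eq_zero (by omega) h, mul_zero]
            exact mul_nonneg (by positivity) (wcoef_nonneg n m)
          · obtain ⟨j, rfl⟩ : ∃ j, m = n + 1 + j := ⟨m - n - 1, by omega⟩
            have hf1 : wcoef (n+1) (n+1+j) =
                ((n:ℝ)+1) * (n+2*j).factorial /
                  (((n+1+j).factorial : ℝ) * j.factorial * 2^(n+2*j+1)) := by
              rw [wcoef_formula (by omega) (by omega)]
              have e1 : 2*(n+1+j) - (n+1) - 1 = n+2*j := by omega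
              have e2 : (n+1+j) - (n+1) = j := by omega
              have e3 : 2*(n+1+j) - (n+1) = n+2*j+1 := by omega
              rw [e1, e2, e3]; push_cast; ring_nf
            have hf0 : wcoef n (n+1+j) =
                (n:ℝ) * (n+2*j+1).factorial /
                  (((n+1+j).factorial : ℝ) * (j+1).factorial * 2^(n+2*j+2)) := by
              rw [wcoef_formula hn (by omega)]
              have e1 : 2*(n+1+j) - n - 1 = n+2*j+1 := by omega
              have e2 : (n+1+j) - n = j+1 := by omega
              have e3 : 2*(n+1+j) - n = n+2*j+2 := by omega
              rw [e1, e2, e3]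
            rw [hf1, hf0]
            have r1 : ((n+2*j+1).factorial : ℝ) = (n+2*j+1)*(n+2*j).factorial := by
              rw [Nat.factorial_succ]; push_cast; ring
            have r2 : ((j+1).factorial : ℝ) = (j+1) * j.factorial := by
              rw [Nat.factorial_succ]; push_cast; ring
            rw [r1, r2]
            have p1 : (0:ℝ) < ((n+1+j).factorial : ℝ) := by positivity
            have p2 : (0:ℝ) < (j.factorial : ℝ) := by positivity
            have p3 : (0:ℝ) < ((n+2*j).factorial : ℝ) := by positivity
            have p7 : (2:ℝ)^(n+2*j+2) = 2 * 2^(n+2*j+1) := by rw [pow_succ]; ring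
            set K : ℝ := (n:ℝ)*((n:ℝ)+1)*((n+2*j).factorial:ℝ) /
              (((n+1+j).factorial:ℝ)*(j.factorial:ℝ)*2^(n+2*j+2)*((j:ℝ)+1)) with hK
            have hKnn : 0 ≤ K := by rw [hK]; positivity
            have eL : (n:ℝ) * (((n:ℝ)+1) * ((n+2*j).factorial:ℝ) /
                (((n+1+j).factorial:ℝ) * (j.factorial:ℝ) * 2^(n+2*j+1)))
                = K * (2*((j:ℝ)+1)) := by
              rw [hK, p7]; field_simp
            have eR : ((n:ℝ)+1) * ((n:ℝ) * (((n:ℝ)+2*(j:ℝ)+1) * ((n+2*j).factorial:ℝ)) /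
                (((n+1+j).factorial:ℝ) * (((j:ℝ)+1) * (j.factorial:ℝ)) * 2^(n+2*j+2)))
                = K * ((n:ℝ)+2*(j:ℝ)+1) := by
              rw [hK]; field_simp
            rw [eL, eR]
            have hcast : (1:ℝ) ≤ (n:ℝ) := by exact_mod_cast hn
            apply mul_le_mul_of_nonneg_left _ hKnn
            linarith
        have hn1 : (0:ℝ) < (n:ℝ) := by exact_mod_cast hn
        have ih' := ih hn
        have h1 : wcoef (n+1) m ≤ ((n:ℝ)+1)/(n:ℝ) * wcoef n m := by
          rw [div_mul_eq_mul_div, le_div_iff₀ hn1]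
          linarith [key]
        calc wcoef (n+1) m ≤ ((n:ℝ)+1)/(n:ℝ) * wcoef n m := h1
          _ ≤ ((n:ℝ)+1)/(n:ℝ) * ((n:ℝ) * wcoef 1 m) := by
              apply mul_le_mul_of_nonneg_left ih'
              positivity
          _ = ((n:ℝ)+1) * wcoef 1 m := by field_simp
          _ = (((n+1:ℕ)):ℝ) * wcoef 1 m := by push_cast; ring

lemma wcoef_conv (n : ℕ) :
    ∑ ij ∈ Finset.HasAntidiagonal.antidiagonal n, wcoef 1 ij.1 * wcoef 1 ij.2
      = 2 * wcoef 1 n - (if n = 1 then 1 else 0) := by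
  match n with
  | 0 => simp [wcoef_eq_zero le_rfl Nat.zero_lt_one]
  | 1 =>
      rw [if_pos rfl]
      have h0 : wcoef 1 0 = 0 := wcoef_eq_zero le_rfl Nat.zero_lt_one
      have h1 : wcoef 1 1 = 1/2 := by simpa using wcoef_diag 1
      rw [Finset.Nat.sum_antidiagonal_eq_sum_range_succ_mk]
      rw [Finset.sum_range_succ, Finset.sum_range_one]
      norm_num [h0, h1]
  | (p+2) =>
      rw [if_neg (by omega), sub_zero]
      rw [Finset.Nat.sum_antidiagonal_eq_sum_range_succ_mk]
      rw [Finset.sum_range_succ, Finset.sum_range_succ']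
      have h0 : wcoef 1 0 = 0 := wcoef_eq_zero le_rfl Nat.zero_lt_one
      have e0 : p + 2 - (p + 2) = 0 := by omega
      rw [e0]
      simp only [h0, mul_zero, zero_mul, add_zero]
      have hterm : ∀ i ∈ Finset.range (p+1),
          wcoef 1 (i+1) * wcoef 1 (p+2-(i+1))
            = (catalan i : ℝ) * (catalan (p-i) : ℝ) / 2^(2*p+2) := by
        intro i hi
        have hip : i ≤ p := by simpa using Nat.lt_succ_iff.mp (Finset.mem_range.mp hi)
        have e1 : p + 2 - (i+1) = p + 1 - i := by omega
        rw [e1, wcoef_one_eq (i+1) (by omega), wcoef_one_eq (p+1-i) (by omega)]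
        have e2 : i + 1 - 1 = i := by omega
        have e3 : 2*(i+1) - 1 = 2*i+1 := by omega
        have e4 : p + 1 - i - 1 = p - i := by omega
        have e5 : 2*(p+1-i) - 1 = 2*p - 2*i + 1 := by omega
        rw [e2, e3, e4, e5]
        rw [div_mul_div_comm, ← pow_add]
        congr 2
        omega
      rw [show ∑ k ∈ Finset.range (p+1),
            wcoef 1 (k+1, p+2-(k+1)).1 * wcoef 1 (k+1, p+2-(k+1)).2
          = ∑ i ∈ Finset.range (p+1), (catalan i : ℝ) * (catalan (p-i) : ℝ) / 2^(2*p+2)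
        from Finset.sum_congr rfl hterm]
      rw [← Finset.sum_div]
      have hcat : ∑ i ∈ Finset.range (p+1), (catalan i : ℝ) * (catalan (p-i) : ℝ)
          = (catalan (p+1) : ℝ) := by
        rw [catalan_succ]
        push_cast
        rw [Fin.sum_univ_eq_sum_range (fun i => (catalan i : ℝ) * (catalan (p-i) : ℝ)) (p+1)]
      rw [hcat, wcoef_one_eq (p+2) (by omega)]
      have e6 : p + 2 - 1 = p + 1 := by omega
      have e7 : 2*(p+2) - 1 = 2*p + 3 := by omega
      rw [e6, e7]
      have : (2:ℝ)^(2*p+3) = 2^(2*p+2) * 2 := by rw [pow_succ]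
      rw [this]
      have h2 : (2:ℝ)^(2*p+2) ≠ 0 := by positivity
      field_simp

lemma summable_wcoef_one_mul {x : ℝ} (hx0 : 0 ≤ x) (hx1 : x ≤ 1) :
    Summable (fun m => wcoef 1 m * x^m) := by
  apply Summable.of_nonneg_of_le
    (fun m => mul_nonneg (wcoef_nonneg 1 m) (pow_nonneg hx0 m))
    (fun m => ?_) summable_wcoef_one
  calc wcoef 1 m * x^m ≤ wcoef 1 m * 1 := by
        apply mul_le_mul_of_nonneg_left _ (wcoef_nonneg 1 m)
        exact pow_le_one₀ hx0 hx1
    _ = wcoef 1 m := mul_one _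

lemma hasSum_wcoef_one {x : ℝ} (hx0 : 0 ≤ x) (hx1 : x < 1) :
    HasSum (fun m => wcoef 1 m * x^m) (1 - Real.sqrt (1-x)) := by
  have hs := summable_wcoef_one_mul hx0 hx1.le
  set g : ℝ := ∑' m, wcoef 1 m * x^m with hg
  have hgle : g ≤ 1 := by
    refine le_trans (Summable.tsum_le_tsum (fun m => ?_) hs summable_wcoef_one) tsum_wcoef_one_le
    calc wcoef 1 m * x^m ≤ wcoef 1 m * 1 := by
          apply mul_le_mul_of_nonneg_left _ (wcoef_nonneg 1 m)
          exact pow_le_one₀ hx0 hx1.le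
      _ = wcoef 1 m := mul_one _
  have hnorm : Summable (fun m => ‖wcoef 1 m * x^m‖) := by
    refine hs.congr (fun m => ?_)
    rw [Real.norm_of_nonneg (mul_nonneg (wcoef_nonneg 1 m) (pow_nonneg hx0 m))]
  have hcauchy := tsum_mul_tsum_eq_tsum_sum_antidiagonal_of_summable_norm hnorm hnorm
  have hinner : ∀ n : ℕ, ∑ ij ∈ Finset.HasAntidiagonal.antidiagonal n,
      (wcoef 1 ij.1 * x^ij.1) * (wcoef 1 ij.2 * x^ij.2)
        = 2 * (wcoef 1 n * x^n) - (if n = 1 then x else 0) := by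
    intro n
    have : ∀ ij ∈ Finset.HasAntidiagonal.antidiagonal n,
        (wcoef 1 ij.1 * x^ij.1) * (wcoef 1 ij.2 * x^ij.2)
          = (wcoef 1 ij.1 * wcoef 1 ij.2) * x^n := by
      intro ij hij
      have := Finset.HasAntidiagonal.mem_antidiagonal.mp hij
      rw [← this, pow_add]; ring
    rw [Finset.sum_congr rfl this, ← Finset.sum_mul, wcoef_conv]
    rcases eq_or_ne n 1 with rfl | hn
    · simp; ring
    · simp [hn]; ring
  rw [tsum_congr hinner] at hcauchy
  have hsplit : ∑' (n : ℕ), (2 * (wcoef 1 n * x^n) - (if n = 1 then x else 0))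
      = 2 * g - x := by
    rw [Summable.tsum_sub (hs.mul_left 2) ⟨_, hasSum_ite_eq 1 x⟩]
    rw [tsum_mul_left, tsum_ite_eq, hg]
  rw [hsplit, ← hg] at hcauchy
  have hsq : (1 - g)^2 = 1 - x := by linear_combination hcauchy
  have h1g : 0 ≤ 1 - g := by linarith
  have hsqrt : Real.sqrt (1-x) = 1 - g := by rw [← hsq, Real.sqrt_sq h1g]
  rw [hsqrt]
  simpa using hs.hasSum

lemma hasSum_wcoef (l : ℕ) {x : ℝ} (hx0 : 0 ≤ x) (hx1 : x < 1) :
    HasSum (fun m => wcoef l m * x^m) ((1 - Real.sqrt (1-x))^l) := by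
  induction l using Nat.twoStepInduction with
  | zero =>
      have : (fun m => wcoef 0 m * x^m) = fun m => if m = 0 then (1:ℝ) else 0 := by
        funext m
        by_cases h : m = 0 <;> simp [wcoef, h]
      rw [this, pow_zero]
      exact hasSum_ite_eq 0 1
  | one =>
      rw [pow_one]
      exact hasSum_wcoef_one hx0 hx1
  | more n ihn ihn1 =>
      set y : ℝ := 1 - Real.sqrt (1-x) with hy
      have hsq : Real.sqrt (1-x)^2 = 1 - x := Real.sq_sqrt (by linarith)
      have hy2 : y^2 = 2*y - x := by rw [hy]; linear_combination hsq
      set G : ℕ → ℝ := fun m => if m = 0 then (0:ℝ) else wcoef n (m-1) * x^m with hGdef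
      have h1 : HasSum (fun m => G (m+1)) (x * y^n) := by
        have h2 := ihn.mul_left x
        have he : (fun m => G (m+1)) = fun m => x * (wcoef n m * x^m) := by
          funext m
          simp only [hGdef, Nat.add_sub_cancel, if_neg (Nat.succ_ne_zero m)]
          rw [pow_succ]
          ring
        rw [he]
        exact h2
      have hG : HasSum G (x * y^n) := by
        have := (hasSum_nat_add_iff (f := G) 1).mp h1
        simpa [hGdef] using this
      have main := (ihn1.mul_left 2).sub hG
      have hF : (fun m => wcoef (n+2) m * x^m)
          = fun m => 2*(wcoef (n+1) m * x^m) - G m := by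
        funext m
        cases m with
        | zero =>
            simp [hGdef, wcoef_eq_zero (show 1 ≤ n+2 by omega) (show 0 < n+2 by omega),
              wcoef_eq_zero (show 1 ≤ n+1 by omega) (show 0 < n+1 by omega)]
        | succ m' =>
            simp only [hGdef, if_neg (Nat.succ_ne_zero m'), Nat.add_sub_cancel]
            rw [wcoef_rec n m']
            ring
      have hv : (2:ℝ)*y^(n+1) - x*y^n = y^(n+2) := by linear_combination (-(y^n)) * hy2
      rw [hF, ← hv]
      exact main

lemma beta_measurable (k : ℝ) (m : ℕ) :
    Measurable (fun t : ℝ => t^(k-1) * (1-t)^m) := by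
  fun_prop

lemma beta_integrable (k : ℝ) (hk : 0 < k) (m : ℕ) :
    IntervalIntegrable (fun t : ℝ => t^(k-1) * (1-t)^m) volume 0 1 := by
  have hbase : IntervalIntegrable (fun t : ℝ => t^(k-1)) volume 0 1 :=
    intervalIntegrable_rpow' (by linarith)
  apply hbase.mono_fun ((beta_measurable k m).aestronglyMeasurable)
  have huIoc : Set.uIoc (0:ℝ) 1 = Set.Ioc (0:ℝ) 1 := Set.uIoc_of_le zero_le_one
  rw [Filter.EventuallyLE, huIoc, ae_restrict_iff' measurableSet_Ioc]
  filter_upwards with t ht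
  rcases ht with ⟨ht0, ht1⟩
  have h1 : |1 - t| ≤ 1 := by rw [abs_le]; constructor <;> linarith
  rw [Real.norm_eq_abs, Real.norm_eq_abs, abs_mul, abs_pow]
  calc |t^(k-1)| * |1-t|^m ≤ |t^(k-1)| * 1 := by
        apply mul_le_mul_of_nonneg_left _ (abs_nonneg _)
        exact pow_le_one₀ (abs_nonneg _) h1
    _ = |t^(k-1)| := mul_one _

lemma beta_value (m : ℕ) : ∀ k : ℝ, 0 < k →
    ∫ t in (0:ℝ)..1, t^(k-1) * (1-t)^m
      = Real.Gamma k * m.factorial / Real.Gamma (k + m + 1) := by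
  induction m with
  | zero =>
      intro k hk
      simp only [pow_zero, mul_one, Nat.factorial_zero, Nat.cast_one, Nat.cast_zero, add_zero]
      rw [integral_rpow (Or.inl (by linarith))]
      rw [Real.zero_rpow (by intro h; apply absurd h; simp; linarith : k - 1 + 1 ≠ 0), Real.one_rpow]
      have hkk : k - 1 + 1 = k := by ring
      rw [hkk, Real.Gamma_add_one (ne_of_gt hk)]
      have h2 : Real.Gamma k ≠ 0 := ne_of_gt (Real.Gamma_pos_of_pos hk)
      field_simp
      norm_num
  | succ m ih =>
      intro k hk
      have key : ∫ t in (0:ℝ)..1, t^(k-1) * (1-t)^(m+1)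
          = (∫ t in (0:ℝ)..1, t^(k-1) * (1-t)^m)
            - ∫ t in (0:ℝ)..1, t^((k+1)-1) * (1-t)^m := by
        rw [← intervalIntegral.integral_sub (beta_integrable k hk m)
          (beta_integrable (k+1) (by linarith) m)]
        apply intervalIntegral.integral_congr_ae
        have huIoc : Set.uIoc (0:ℝ) 1 = Set.Ioc (0:ℝ) 1 := Set.uIoc_of_le zero_le_one
        simp only [huIoc]
        filter_upwards with t ht
        rcases ht with ⟨ht0, ht1⟩
        have h1 : t^((k+1)-1) = t^(k-1) * t := by
          rw [show (k+1)-1 = (k-1) + 1 by ring, Real.rpow_add_one (ne_of_gt ht0)]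
        rw [h1, pow_succ]
        ring
      rw [key, ih k hk, ih (k+1) (by linarith)]
      have g1 : Real.Gamma (k+1) = k * Real.Gamma k := Real.Gamma_add_one (ne_of_gt hk)
      have p1 : 0 < Real.Gamma (k+m+1) := Real.Gamma_pos_of_pos (by positivity)
      have p2 : 0 < Real.Gamma k := Real.Gamma_pos_of_pos hk
      have hfact : ((m+1).factorial : ℝ) = ((m:ℝ)+1) * m.factorial := by
        rw [Nat.factorial_succ]; push_cast; ring
      push_cast
      rw [show k + 1 + (m:ℝ) + 1 = (k + (m:ℝ) + 1) + 1 by ring,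
        show k + ((m:ℝ) + 1) + 1 = (k + (m:ℝ) + 1) + 1 by ring,
        Real.Gamma_add_one (show k + (m:ℝ) + 1 ≠ 0 by positivity), g1, hfact]
      field_simp
      ring


section CoV
variable {k r : ℝ} (hk : 0 < k) (hr0 : 0 ≤ r) (hr1 : r < 1) (m : ℕ)

lemma sq_image_Ioo (hr0 : 0 ≤ r) : (fun s : ℝ => s^2) '' Ioo r 1 = Ioo (r^2) 1 := by
  ext u
  constructor
  · rintro ⟨s, ⟨hs1, hs2⟩, rfl⟩
    have hs0 : 0 ≤ s := le_trans hr0 hs1.le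
    constructor
    · exact pow_lt_pow_left₀ hs1 hr0 two_ne_zero
    · calc s^2 < 1^2 := pow_lt_pow_left₀ hs2 hs0 two_ne_zero
        _ = 1 := one_pow 2
  · rintro ⟨hu1, hu2⟩
    have hu0 : 0 ≤ u := le_trans (by positivity) hu1.le
    refine ⟨Real.sqrt u, ⟨?_, ?_⟩, ?_⟩
    · calc r = Real.sqrt (r^2) := (Real.sqrt_sq hr0).symm
        _ < Real.sqrt u := Real.sqrt_lt_sqrt (by positivity) hu1
    · calc Real.sqrt u < Real.sqrt 1 := Real.sqrt_lt_sqrt hu0 hu2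
        _ = 1 := Real.sqrt_one
    · show Real.sqrt u ^ 2 = u
      exact Real.sq_sqrt hu0

lemma mul_image_Ioo {z : ℝ} (hz : 0 < z) : (fun t : ℝ => z*t) '' Ioo 0 1 = Ioo 0 z := by
  ext u
  constructor
  · rintro ⟨t, ⟨ht1, ht2⟩, rfl⟩
    exact ⟨by positivity, by have := mul_lt_mul_of_pos_left ht2 hz; simpa using this⟩
  · rintro ⟨hu1, hu2⟩
    exact ⟨u/z, ⟨by positivity, by rw [div_lt_one hz]; exact hu2⟩, by field_simp⟩

lemma sq_injOn (hr0 : 0 ≤ r) : InjOn (fun s : ℝ => s^2) (Ioo r 1) := by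
  intro a ha b hb h
  simp only at h
  rcases sq_eq_sq_iff_eq_or_eq_neg.mp h with h1 | h1
  · exact h1
  · have := ha.1; have := hb.1; linarith

include hk hr0 hr1 in
lemma Ival_integrable :
    IntegrableOn (fun s : ℝ => s*(1-s^2)^m*(s^2-r^2)^(k-1)) (Ioo r 1) := by
  set z : ℝ := 1 - r^2 with hz
  have hz0 : 0 < z := by rw [hz]; nlinarith
  -- integrability of base beta on Ioo 0 1
  have h1 : IntegrableOn (fun t : ℝ => t^(k-1) * (1-t)^m) (Ioo 0 1) := by
    have := (beta_integrable k hk m)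
    rw [intervalIntegrable_iff, uIoc_of_le zero_le_one] at this
    exact this.mono_set Ioo_subset_Ioc_self
  -- scale to Ioo 0 z
  have h2 : IntegrableOn (fun v : ℝ => v^(k-1) * (1-(v+r^2))^m) (Ioo 0 z) := by
    have himg := mul_image_Ioo hz0
    have hderiv : ∀ t ∈ Ioo (0:ℝ) 1, HasDerivWithinAt (fun t : ℝ => z*t) z (Ioo 0 1) t :=
      fun t _ => by simpa using ((hasDerivAt_id t).const_mul z).hasDerivWithinAt
    have hinj : InjOn (fun t : ℝ => z*t) (Ioo 0 1) :=
      fun a _ b _ h => mul_left_cancel₀ (ne_of_gt hz0) h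
    rw [← himg, integrableOn_image_iff_integrableOn_abs_deriv_smul measurableSet_Ioo hderiv hinj]
    apply IntegrableOn.congr_fun (h1.const_mul (z^(k-1) * z^m * |z|)) ?_ measurableSet_Ioo
    intro t ht
    simp only [smul_eq_mul]
    rw [show 1 - (z*t + r^2) = z * (1-t) by rw [hz]; ring, mul_pow,
      Real.mul_rpow hz0.le ht.1.le]
    ring
  -- shift to Ioo r² 1
  have h3 : IntegrableOn (fun u : ℝ => (1-u)^m * (u-r^2)^(k-1)) (Ioo (r^2) 1) := by
    have himg : (fun v : ℝ => v + r^2) '' Ioo 0 z = Ioo (r^2) 1 := by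
      rw [image_add_const_Ioo, zero_add, hz]; ring_nf
    have hderiv : ∀ v ∈ Ioo (0:ℝ) z, HasDerivWithinAt (fun v : ℝ => v + r^2) 1 (Ioo 0 z) v :=
      fun v _ => ((hasDerivAt_id v).add_const (r^2)).hasDerivWithinAt
    have hinj : InjOn (fun v : ℝ => v + r^2) (Ioo 0 z) := fun a _ b _ h => by
      simpa using h
    rw [← himg, integrableOn_image_iff_integrableOn_abs_deriv_smul measurableSet_Ioo hderiv hinj]
    apply IntegrableOn.congr_fun h2 ?_ measurableSet_Ioo
    intro v hv
    simp only [smul_eq_mul, abs_one, one_mul, add_sub_cancel_right]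
    ring
  -- square to Ioo r 1
  have himg := sq_image_Ioo hr0
  have hderiv : ∀ s ∈ Ioo r 1, HasDerivWithinAt (fun s : ℝ => s^2) (2*s) (Ioo r 1) s := by
    intro s _
    simpa using (hasDerivAt_pow 2 s).hasDerivWithinAt
  have h4 := (integrableOn_image_iff_integrableOn_abs_deriv_smul measurableSet_Ioo hderiv
    (sq_injOn hr0) (fun u : ℝ => (1-u)^m * (u-r^2)^(k-1))).mp (by rw [himg]; exact h3)
  apply IntegrableOn.congr_fun (h4.const_mul (1/2)) ?_ measurableSet_Ioo
  intro s hs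
  have hs0 : 0 < s := lt_of_le_of_lt hr0 hs.1
  simp only [smul_eq_mul]
  rw [abs_of_nonneg (by positivity : (0:ℝ) ≤ 2*s)]
  ring

include hk hr0 hr1 in
lemma Ival :
    ∫ s in Ioo r 1, s*(1-s^2)^m*(s^2-r^2)^(k-1)
      = (1-r^2)^(k+(m:ℝ)) * (Real.Gamma k * m.factorial) / (2 * Real.Gamma (k+m+1)) := by
  set z : ℝ := 1 - r^2 with hz
  have hz0 : 0 < z := by rw [hz]; nlinarith
  -- step 1: square substitution
  have hderiv : ∀ s ∈ Ioo r 1, HasDerivWithinAt (fun s : ℝ => s^2) (2*s) (Ioo r 1) s := by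
    intro s _
    simpa using (hasDerivAt_pow 2 s).hasDerivWithinAt
  have e1 : ∫ u in Ioo (r^2) 1, (1-u)^m * (u-r^2)^(k-1)
      = ∫ s in Ioo r 1, (2*s) * ((1-s^2)^m * (s^2-r^2)^(k-1)) := by
    rw [← sq_image_Ioo hr0, integral_image_eq_integral_abs_deriv_smul measurableSet_Ioo hderiv
      (sq_injOn hr0)]
    apply setIntegral_congr_fun measurableSet_Ioo
    intro s hs
    have hs0 : 0 < s := lt_of_le_of_lt hr0 hs.1
    simp only [smul_eq_mul]
    rw [abs_of_nonneg (by positivity : (0:ℝ) ≤ 2*s)]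
  -- step 2: shift substitution
  have hderiv2 : ∀ v ∈ Ioo (0:ℝ) z, HasDerivWithinAt (fun v : ℝ => v + r^2) 1 (Ioo 0 z) v :=
    fun v _ => ((hasDerivAt_id v).add_const (r^2)).hasDerivWithinAt
  have himg2 : (fun v : ℝ => v + r^2) '' Ioo 0 z = Ioo (r^2) 1 := by
    rw [image_add_const_Ioo, zero_add, hz]; ring_nf
  have e2 : ∫ u in Ioo (r^2) 1, (1-u)^m * (u-r^2)^(k-1)
      = ∫ v in Ioo 0 z, (z-v)^m * v^(k-1) := by
    rw [← himg2, integral_image_eq_integral_abs_deriv_smul measurableSet_Ioo hderiv2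
      (fun a _ b _ h => by simpa using h)]
    apply setIntegral_congr_fun measurableSet_Ioo
    intro v hv
    simp only [smul_eq_mul, abs_one, one_mul, add_sub_cancel_right]
    rw [show 1 - (v + r^2) = z - v by rw [hz]; ring]
  -- step 3: scaling substitution
  have hderiv3 : ∀ t ∈ Ioo (0:ℝ) 1, HasDerivWithinAt (fun t : ℝ => z*t) z (Ioo 0 1) t :=
    fun t _ => by simpa using ((hasDerivAt_id t).const_mul z).hasDerivWithinAt
  have e3 : ∫ v in Ioo 0 z, (z-v)^m * v^(k-1)
      = (z^m * z^(k-1) * z) * ∫ t in Ioo (0:ℝ) 1, t^(k-1) * (1-t)^m := by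
    rw [← mul_image_Ioo hz0, integral_image_eq_integral_abs_deriv_smul measurableSet_Ioo hderiv3
      (fun a _ b _ h => mul_left_cancel₀ (ne_of_gt hz0) h)]
    rw [← MeasureTheory.integral_const_mul]
    apply setIntegral_congr_fun measurableSet_Ioo
    intro t ht
    simp only [smul_eq_mul]
    rw [show z - z*t = z * (1-t) by ring, mul_pow, Real.mul_rpow hz0.le ht.1.le,
      abs_of_nonneg hz0.le]
    ring
  -- the target integral equals half of e1's RHS
  have e0 : ∫ s in Ioo r 1, s*(1-s^2)^m*(s^2-r^2)^(k-1)
      = (1/2) * ∫ u in Ioo (r^2) 1, (1-u)^m * (u-r^2)^(k-1) := by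
    rw [e1, ← MeasureTheory.integral_const_mul]
    apply setIntegral_congr_fun measurableSet_Ioo
    intro s hs
    ring
  rw [e0, e2, e3]
  have hbeta : ∫ t in Ioo (0:ℝ) 1, t^(k-1) * (1-t)^m
      = Real.Gamma k * m.factorial / Real.Gamma (k + m + 1) := by
    rw [← beta_value m k hk, integral_of_le zero_le_one, integral_Ioc_eq_integral_Ioo]
  rw [hbeta]
  have hzpow : z^m * z^(k-1) * z = z^(k+(m:ℝ)) := by
    rw [← Real.rpow_natCast z m, ← Real.rpow_add hz0, ← Real.rpow_add_one (ne_of_gt hz0)]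
    congr 1
    ring
  rw [hzpow]
  ring
end CoV

lemma poch_zero (a : ℝ) : poch a 0 = 1 := Finset.prod_range_zero _
lemma poch_succ (a : ℝ) (n : ℕ) : poch a (n+1) = poch a n * (a + n) :=
  Finset.prod_range_succ _ _

lemma poch_pos {a : ℝ} (ha : 0 < a) (n : ℕ) : 0 < poch a n := by
  induction n with
  | zero => rw [poch_zero]; norm_num
  | succ n ih => rw [poch_succ]; positivity

lemma Gamma_poch {a : ℝ} (ha : 0 < a) (n : ℕ) :
    Real.Gamma a * poch a n = Real.Gamma (a + n) := by
  induction n with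
  | zero => simp [poch_zero]
  | succ n ih =>
      rw [poch_succ, ← mul_assoc, ih]
      rw [show a + ((n:ℕ)+1:ℕ) = (a + n) + 1 by push_cast; ring,
        Real.Gamma_add_one (by positivity)]
      ring

lemma poch_dup (a : ℝ) (n : ℕ) :
    poch a n * poch (a + 1/2) n * 4^n = poch (2*a) (2*n) := by
  induction n with
  | zero => simp [poch_zero]
  | succ n ih =>
      rw [show 2*(n+1) = (2*n+1)+1 by ring, poch_succ, poch_succ, poch_succ, poch_succ,
        ← ih]
      push_cast
      ring

lemma poch_nat_factorial {l : ℕ} (hl : 1 ≤ l) (j : ℕ) :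
    poch (l:ℝ) j * ((l-1).factorial : ℝ) = ((l-1+j).factorial : ℝ) := by
  induction j with
  | zero => simp [poch_zero]
  | succ j ih =>
      rw [poch_succ, show l-1+(j+1) = (l-1+j)+1 by omega, Nat.factorial_succ,
        mul_comm (poch (l:ℝ) j) _, mul_assoc, ih]
      push_cast
      have : ((l:ℝ) - 1 + (j:ℝ)) + 1 = (l:ℝ) + j := by ring
      rw [Nat.cast_sub hl]
      push_cast
      ring

lemma fact_le_poch {k : ℝ} (hk : 0 < k) (m : ℕ) :
    (m.factorial : ℝ) ≤ poch (k+1) m := by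
  induction m with
  | zero => simp [poch_zero]
  | succ m ih =>
      rw [poch_succ, Nat.factorial_succ]
      push_cast
      have h1 : (m:ℝ) + 1 ≤ k + 1 + m := by linarith
      have h2 : (0:ℝ) ≤ (m:ℝ) + 1 := by positivity
      calc ((m:ℝ)+1) * m.factorial ≤ (k+1+m) * m.factorial := by
            apply mul_le_mul_of_nonneg_right h1 (by positivity)
        _ ≤ (k+1+m) * poch (k+1) m := by
            apply mul_le_mul_of_nonneg_left ih (by linarith)
        _ = poch (k+1) m * (k+1+m) := by ring

lemma Gamma_fact_le {k : ℝ} (hk : 0 < k) (m : ℕ) :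
    Real.Gamma (k+1) * m.factorial ≤ Real.Gamma (k+m+1) := by
  have h1 := Gamma_poch (show (0:ℝ) < k+1 by linarith) m
  have h2 : Real.Gamma (k+m+1) = Real.Gamma (k+1) * poch (k+1) m := by
    rw [h1]; congr 1; ring
  rw [h2]
  apply mul_le_mul_of_nonneg_left (fact_le_poch hk m)
    (le_of_lt (Real.Gamma_pos_of_pos (by linarith)))

lemma keyterm {k : ℝ} (hk : 0 < k) {l : ℕ} (hl : 1 ≤ l) (n : ℕ) {z : ℝ} (hz0 : 0 < z) :
    (1/(Real.Gamma k * (2:ℝ)^(k-1))) *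
      (wcoef l (n+l) * (z^(k+((n+l:ℕ):ℝ)) * (Real.Gamma k * (n+l).factorial)
        / (2*Real.Gamma (k+((n+l:ℕ):ℝ)+1))))
    = (Real.Gamma ((l:ℝ)+1)/((2:ℝ)^((l:ℝ)+k) * Real.Gamma ((l:ℝ)+k+1)) * z^((l:ℝ)+k)) *
        (poch ((l:ℝ)/2) n * poch (((l:ℝ)+1)/2) n / poch ((l:ℝ)+k+1) n * z^n / n.factorial) := by
  -- rewrite wcoef
  have hwc : wcoef l (n+l) = (l : ℝ) * ((l-1+2*n).factorial : ℝ) /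
      (((n+l).factorial : ℝ) * (n.factorial : ℝ) * 2^(l+2*n)) := by
    rw [wcoef_formula hl (by omega)]
    have e1 : 2*(n+l) - l - 1 = l-1+2*n := by omega
    have e2 : (n+l) - l = n := by omega
    have e3 : 2*(n+l) - l = l+2*n := by omega
    rw [e1, e2, e3]
  -- factorial to poch
  have hdup : poch ((l:ℝ)/2) n * poch (((l:ℝ)/2) + 1/2) n * 4^n = poch (l:ℝ) (2*n) := by
    have := poch_dup ((l:ℝ)/2) n
    rwa [show 2*((l:ℝ)/2) = (l:ℝ) by ring] at this
  have hdup' : poch ((l:ℝ)/2) n * poch (((l:ℝ)+1)/2) n * 4^n = poch (l:ℝ) (2*n) := by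
    rw [show ((l:ℝ)+1)/2 = (l:ℝ)/2 + 1/2 by ring]; exact hdup
  have hnat : poch (l:ℝ) (2*n) * ((l-1).factorial : ℝ) = ((l-1+2*n).factorial : ℝ) :=
    poch_nat_factorial hl (2*n)
  have hfact : ((l-1+2*n).factorial : ℝ)
      = poch ((l:ℝ)/2) n * poch (((l:ℝ)+1)/2) n * 4^n * ((l-1).factorial : ℝ) := by
    rw [hdup', hnat]
  -- Gamma identities
  have hGp : Real.Gamma ((l:ℝ)+k+1) * poch ((l:ℝ)+k+1) n = Real.Gamma ((l:ℝ)+k+1+n) :=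
    Gamma_poch (by positivity) n
  have hGkn : Real.Gamma (k+((n+l:ℕ):ℝ)+1) = Real.Gamma ((l:ℝ)+k+1+n) := by
    congr 1; push_cast; ring
  have hGl : Real.Gamma ((l:ℝ)+1) = (l:ℝ) * ((l-1).factorial : ℝ) := by
    rw [show (l:ℝ)+1 = ((l:ℕ):ℝ)+1 from rfl, Real.Gamma_nat_eq_factorial]
    rw [← Nat.mul_factorial_pred (show l ≠ 0 by omega)]
    push_cast
    ring
  -- z powers
  have hzp : z^(k+((n+l:ℕ):ℝ)) = z^((l:ℝ)+k) * z^(n:ℕ) := by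
    rw [show k+((n+l:ℕ):ℝ) = ((l:ℝ)+k) + (n:ℝ) by push_cast; ring,
      Real.rpow_add hz0, Real.rpow_natCast]
  -- 2 powers
  have h2a : (2:ℝ)^((l:ℝ)+k) = (2:ℝ)^k * 2^(l:ℕ) := by
    rw [show (l:ℝ)+k = k + (l:ℝ) by ring, Real.rpow_add two_pos, Real.rpow_natCast]
  have h2b : (2:ℝ)^(k-1) = (2:ℝ)^k / 2 := by
    rw [Real.rpow_sub two_pos, Real.rpow_one]
  have h2c : (2:ℝ)^(l+2*n) = 2^(l:ℕ) * 2^(2*n) := pow_add 2 l (2*n)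
  have h4n : (4:ℝ)^n = 2^(2*n) := by rw [pow_mul]; norm_num
  -- substitute everything
  rw [hwc, hfact, hGkn, ← hGp, hGl, hzp, h2a, h2b, h2c, h4n]
  -- nonzero facts
  have p1 : Real.Gamma k ≠ 0 := ne_of_gt (Real.Gamma_pos_of_pos hk)
  have p2 : Real.Gamma ((l:ℝ)+k+1) ≠ 0 := ne_of_gt (Real.Gamma_pos_of_pos (by positivity))
  have p3 : poch ((l:ℝ)+k+1) n ≠ 0 := ne_of_gt (poch_pos (by positivity) n)
  have p4 : ((n+l).factorial : ℝ) ≠ 0 := by positivity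
  have p5 : (n.factorial : ℝ) ≠ 0 := by positivity
  have p6 : ((l-1).factorial : ℝ) ≠ 0 := by positivity
  have p7 : (2:ℝ)^k ≠ 0 := ne_of_gt (Real.rpow_pos_of_pos two_pos k)
  have p8 : (2:ℝ)^(l:ℕ) ≠ 0 := by positivity
  have p9 : (2:ℝ)^(2*n) ≠ 0 := by positivity
  have p10 : z^((l:ℝ)+k) ≠ 0 := ne_of_gt (Real.rpow_pos_of_pos hz0 _)
  field_simp
end Aux

theorem wendland_hypergeometric (k : ℝ) (hk : 0 < k) (l : ℕ) (hl : 1 ≤ l)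
    (r : ℝ) (hr0 : 0 ≤ r) (hr1 : r ≤ 1) :
    wendland l k r =
      Real.Gamma ((l : ℝ) + 1) / ((2:ℝ) ^ ((l : ℝ) + k) * Real.Gamma ((l : ℝ) + k + 1)) *
        (1 - r ^ 2) ^ ((l : ℝ) + k) *
        twoF1 ((l : ℝ) / 2) (((l : ℝ) + 1) / 2) ((l : ℝ) + k + 1) (1 - r ^ 2) := by
  rcases eq_or_lt_of_le hr1 with heq | hrlt
  · -- r = 1 case
    subst heq
    rw [show (1:ℝ) - 1^2 = 0 by norm_num,
      Real.zero_rpow (show (l:ℝ)+k ≠ 0 by positivity)]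
    simp only [wendland, if_pos le_rfl, intervalIntegral.integral_same, mul_zero, zero_mul]
  · -- r < 1 case
    set z : ℝ := 1 - r^2 with hzdef
    have hz0 : 0 < z := by rw [hzdef]; nlinarith
    have hz1 : z ≤ 1 := by rw [hzdef]; nlinarith
    set F : ℕ → ℝ → ℝ := fun m s => wcoef l m * (s * (1-s^2)^m * (s^2-r^2)^(k-1)) with hF
    have hFi : ∀ m, IntegrableOn (F m) (Set.Ioo r 1) := fun m =>
      (Ival_integrable hk hr0 hrlt m).const_mul (wcoef l m)
    have hFval : ∀ m : ℕ, ∫ s in Set.Ioo r 1, F m s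
        = wcoef l m * (z^(k+(m:ℝ)) * (Real.Gamma k * m.factorial)
            / (2*Real.Gamma (k+m+1))) := by
      intro m
      rw [hF]
      simp only
      rw [MeasureTheory.integral_const_mul, Ival hk hr0 hrlt m, ← hzdef]
      try ring
    set cm : ℕ → ℝ := fun m => wcoef l m * (z^(k+(m:ℝ)) * (Real.Gamma k * m.factorial)
        / (2*Real.Gamma (k+m+1))) with hcm
    have hGk : 0 < Real.Gamma k := Real.Gamma_pos_of_pos hk
    have hGk1 : 0 < Real.Gamma (k+1) := Real.Gamma_pos_of_pos (by positivity)
    have hcm_nonneg : ∀ m, 0 ≤ cm m := by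
      intro m
      rw [hcm]
      have h1 : (0:ℝ) < Real.Gamma (k+m+1) := Real.Gamma_pos_of_pos (by positivity)
      have h3 : (0:ℝ) ≤ z^(k+(m:ℝ)) := (Real.rpow_pos_of_pos hz0 _).le
      exact mul_nonneg (wcoef_nonneg l m)
        (div_nonneg (mul_nonneg h3 (by positivity)) (by positivity))
    have hK : ∀ m : ℕ, z^(k+(m:ℝ)) * (Real.Gamma k * m.factorial) / (2*Real.Gamma (k+m+1))
        ≤ z^k * Real.Gamma k / (2*Real.Gamma (k+1)) := by
      intro m
      have hA : z^(k+(m:ℝ)) ≤ z^k :=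
        Real.rpow_le_rpow_of_exponent_ge hz0 hz1 (le_add_of_nonneg_right (Nat.cast_nonneg m))
      have hB := Gamma_fact_le hk m
      have p1 : 0 < Real.Gamma (k+m+1) := Real.Gamma_pos_of_pos (by positivity)
      have hzk : 0 < z^k := Real.rpow_pos_of_pos hz0 k
      have hzkm : (0:ℝ) ≤ z^(k+(m:ℝ)) := (Real.rpow_pos_of_pos hz0 _).le
      rw [div_le_div_iff₀ (by positivity) (by positivity)]
      calc z^(k+(m:ℝ)) * (Real.Gamma k * m.factorial) * (2*Real.Gamma (k+1))
          ≤ z^k * (Real.Gamma k * m.factorial) * (2*Real.Gamma (k+1)) := by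
            apply mul_le_mul_of_nonneg_right
              (mul_le_mul_of_nonneg_right hA (by positivity)) (by positivity)
        _ = (z^k * Real.Gamma k) * (2 * (Real.Gamma (k+1) * m.factorial)) := by ring
        _ ≤ (z^k * Real.Gamma k) * (2 * Real.Gamma (k+m+1)) := by
            apply mul_le_mul_of_nonneg_left _ (mul_nonneg hzk.le hGk.le)
            linarith [hB]
        _ = z^k * Real.Gamma k * (2*Real.Gamma (k+m+1)) := by ring
    have hKnn : (0:ℝ) ≤ z^k * Real.Gamma k / (2*Real.Gamma (k+1)) := by
      have hzk : 0 < z^k := Real.rpow_pos_of_pos hz0 k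
      positivity
    have hsummable : Summable cm := by
      apply Summable.of_nonneg_of_le hcm_nonneg (fun m => ?_)
        ((summable_wcoef_one.mul_left ((z^k * Real.Gamma k/(2*Real.Gamma (k+1))) * l)))
      calc cm m ≤ wcoef l m * (z^k * Real.Gamma k / (2*Real.Gamma (k+1))) := by
            rw [hcm]
            exact mul_le_mul_of_nonneg_left (hK m) (wcoef_nonneg l m)
        _ ≤ ((l:ℝ) * wcoef 1 m) * (z^k * Real.Gamma k / (2*Real.Gamma (k+1))) :=
            mul_le_mul_of_nonneg_right (wcoef_le_mul l m hl) hKnn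
        _ = (z^k * Real.Gamma k/(2*Real.Gamma (k+1))) * l * wcoef 1 m := by ring
    have hinter : ∫ s in Set.Ioo r 1, (s * (1-s)^l * (s^2-r^2)^(k-1)) = ∑' m, cm m := by
      have hcongr : ∫ s in Set.Ioo r 1, (s * (1-s)^l * (s^2-r^2)^(k-1))
          = ∫ s in Set.Ioo r 1, ∑' m, F m s := by
        apply MeasureTheory.setIntegral_congr_fun measurableSet_Ioo
        intro s hs
        have hs0 : 0 < s := lt_of_le_of_lt hr0 hs.1
        have hx0 : (0:ℝ) ≤ 1 - s^2 := by nlinarith [hs.2]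
        have hx1 : 1 - s^2 < 1 := by nlinarith
        have hsum := hasSum_wcoef l hx0 hx1
        rw [show 1 - (1-s^2) = s^2 by ring, Real.sqrt_sq hs0.le] at hsum
        have hsum2 := hsum.mul_right (s * (s^2-r^2)^(k-1))
        have e : (fun m => (wcoef l m * (1-s^2)^m) * (s*(s^2-r^2)^(k-1)))
            = fun m => F m s := by
          funext m; rw [hF]; ring
        rw [e] at hsum2
        show s * (1-s)^l * (s^2-r^2)^(k-1) = ∑' m, F m s
        rw [hsum2.tsum_eq]
        ring
      have hnorm : ∀ m : ℕ, ∫⁻ s in Set.Ioo r 1, ‖F m s‖ₑ = ENNReal.ofReal (cm m) := by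
        intro m
        rw [← MeasureTheory.ofReal_integral_norm_eq_lintegral_enorm (hFi m)]
        congr 1
        rw [hcm]
        simp only
        rw [← hFval m]
        apply MeasureTheory.setIntegral_congr_fun measurableSet_Ioo
        intro s hs
        have hs0 : 0 < s := lt_of_le_of_lt hr0 hs.1
        have h1 : (0:ℝ) ≤ 1 - s^2 := by nlinarith [hs.2]
        have h2 : (0:ℝ) ≤ (s^2-r^2)^(k-1) := Real.rpow_nonneg (by nlinarith [hs.1]) _
        have h3 : 0 ≤ F m s := by
          rw [hF]
          exact mul_nonneg (wcoef_nonneg l m)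
            (mul_nonneg (mul_nonneg hs0.le (by positivity)) h2)
        exact norm_of_nonneg h3
      have hfin : ∑' m : ℕ, ∫⁻ s in Set.Ioo r 1, ‖F m s‖ₑ ≠ ⊤ := by
        rw [tsum_congr hnorm, ← ENNReal.ofReal_tsum_of_nonneg hcm_nonneg hsummable]
        exact ENNReal.ofReal_ne_top
      rw [hcongr, MeasureTheory.integral_tsum (fun m => (hFi m).aestronglyMeasurable) hfin]
      exact tsum_congr hFval
    simp only [wendland, if_pos hr1]
    rw [intervalIntegral.integral_of_le hr1, MeasureTheory.integral_Ioc_eq_integral_Ioo]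
    rw [hinter]
    have hzero : ∑ i ∈ Finset.range l, cm i = 0 := by
      apply Finset.sum_eq_zero
      intro i hi
      rw [hcm]
      simp only
      rw [wcoef_eq_zero hl (Finset.mem_range.mp hi), zero_mul]
    rw [← Summable.sum_add_tsum_nat_add (f := cm) l hsummable, hzero, zero_add]
    rw [twoF1]
    rw [← tsum_mul_left, ← tsum_mul_left]
    apply tsum_congr
    intro n
    have hterm := keyterm hk hl n hz0
    rw [hcm]
    simp only
    convert hterm using 2 <;> push_cast <;> ring
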